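/- Let m ∈ ℕ, M > 2m, and for k ∈ {1,2} let ξ_θ(x) = x_k + χ_θ(x) with χ_θ as defined by the hyperpyramid basis construction with parameter θ ∈ {0,1}^{m×m}. Then for any θ⁽¹⁾, θ⁽²⁾ ∈ {0,1}^{m×m}, the function f = (f₁, f₂) with f₁(x) = x₁ + χ_{θ⁽¹⁾}(x) and f₂(x) = x₂ + χ_{θ⁽²⁾}(x) is a bijection from I² to I². -/

import Mathlib

noncomputable section
open scoped Classical

abbrev E2 := EuclideanSpace ℝ (Fin 2)

def pt (a b : ℝ) : E2 := (WithLp.equiv 2 (Fin 2 → ℝ)).symm ![a, b]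

def Isq : Set E2 := {x | x 0 ∈ Set.Icc (-1:ℝ) 1 ∧ x 1 ∈ Set.Icc (-1:ℝ) 1}

def Phi (x : E2) : ℝ := if x ∈ Isq then Metric.infDist x (frontier Isq) else 0

def gridPt (m : ℕ) (j : Fin m) : ℝ := -1 + (2 * (j : ℝ) + 1) / m

def chi (m : ℕ) (M : ℝ) (θ : Fin m → Fin m → ℝ) (x : E2) : ℝ :=
  ∑ j₁ : Fin m, ∑ j₂ : Fin m,
    (θ j₁ j₂ / M) * Phi (pt (m * (x 0 - gridPt m j₁)) (m * (x 1 - gridPt m j₂)))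

set_option maxHeartbeats 1000000

lemma pt_app0 (a b : ℝ) : pt a b 0 = a := rfl
lemma pt_app1 (a b : ℝ) : pt a b 1 = b := rfl

lemma dist_eq2 (x y : E2) : dist x y = Real.sqrt ((x 0 - y 0)^2 + (x 1 - y 1)^2) := by
  rw [EuclideanSpace.dist_eq, Fin.sum_univ_two]
  simp [Real.dist_eq, sq_abs]

lemma isClosed_Isq : IsClosed Isq := by
  have h0 : Continuous (fun x : E2 => x 0) := (EuclideanSpace.proj (0 : Fin 2)).continuous
  have h1 : Continuous (fun x : E2 => x 1) := (EuclideanSpace.proj (1 : Fin 2)).continuous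
  exact (isClosed_Icc.preimage h0).inter (isClosed_Icc.preimage h1)

lemma mem_frontier_of (u : E2) (hu : u ∈ Isq) (h : |u 0| = 1 ∨ |u 1| = 1) :
    u ∈ frontier Isq := by
  rw [frontier, isClosed_Isq.closure_eq]
  refine ⟨hu, fun hint => ?_⟩
  rw [mem_interior_iff_mem_nhds, Metric.mem_nhds_iff] at hint
  obtain ⟨ε, hε, hball⟩ := hint
  have key : ∀ i : Fin 2, |u i| = 1 → False := by
    intro i hi
    set c : ℝ := (if 0 ≤ u i then 1 else -1) * (ε/2) with hc
    have hu' : u + EuclideanSpace.single i c ∈ Metric.ball u ε := by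
      rw [Metric.mem_ball, dist_eq_norm]
      have : u + EuclideanSpace.single i c - u = EuclideanSpace.single i c := by abel
      rw [this, EuclideanSpace.norm_single]
      rw [Real.norm_eq_abs, hc, abs_mul]
      have : |(if 0 ≤ u i then (1:ℝ) else -1)| = 1 := by split <;> simp
      rw [this, one_mul, abs_of_pos (by linarith)]
      linarith
    have hmem := hball hu'
    have happ : (u + EuclideanSpace.single i c) i = u i + c := by
      simp [EuclideanSpace.single_apply]
    have habs : |u i + c| > 1 := by
      rw [hc]
      rcases le_or_gt 0 (u i) with h' | h'
      · rw [if_pos h']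
        have : u i = 1 := by rw [abs_of_nonneg h'] at hi; exact hi
        rw [this]; rw [abs_of_pos (by linarith)]; linarith
      · rw [if_neg (not_le.mpr h')]
        have : u i = -1 := by rw [abs_of_neg h'] at hi; linarith
        rw [this]
        rw [abs_of_neg (by linarith)]; linarith
    have : |(u + EuclideanSpace.single i c) i| ≤ 1 := by
      fin_cases i
      · exact abs_le.mpr ⟨hmem.1.1, hmem.1.2⟩
      · exact abs_le.mpr ⟨hmem.2.1, hmem.2.2⟩
    rw [happ] at this
    linarith [habs]
  rcases h with h | h
  · exact key 0 h
  · exact key 1 h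

lemma frontier_sub (z : E2) (hz : z ∈ frontier Isq) :
    z ∈ Isq ∧ (|z 0| = 1 ∨ |z 1| = 1) := by
  have hzI : z ∈ Isq := by
    have := hz.1
    rwa [isClosed_Isq.closure_eq] at this
  refine ⟨hzI, ?_⟩
  by_contra hcon
  push_neg at hcon
  obtain ⟨h0, h1⟩ := hcon
  have hlt0 : |z 0| < 1 := lt_of_le_of_ne (abs_le.mpr hzI.1) h0
  have hlt1 : |z 1| < 1 := lt_of_le_of_ne (abs_le.mpr hzI.2) h1
  have hO : IsOpen {x : E2 | |x 0| < 1 ∧ |x 1| < 1} := by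
    have h0 : Continuous (fun x : E2 => |x 0|) :=
      ((EuclideanSpace.proj (0 : Fin 2)).continuous).abs
    have h1 : Continuous (fun x : E2 => |x 1|) :=
      ((EuclideanSpace.proj (1 : Fin 2)).continuous).abs
    exact (isOpen_lt h0 continuous_const).inter (isOpen_lt h1 continuous_const)
  have hsub : {x : E2 | |x 0| < 1 ∧ |x 1| < 1} ⊆ Isq := by
    intro u hu
    exact ⟨Set.mem_Icc.mpr (abs_le.mp hu.1.le), Set.mem_Icc.mpr (abs_le.mp hu.2.le)⟩
  have : z ∈ interior Isq := (hO.subset_interior_iff.mpr hsub) ⟨hlt0, hlt1⟩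
  exact hz.2 this

lemma phi_eq (x : E2) : Phi x = max 0 (min (1 - |x 0|) (1 - |x 1|)) := by
  rcases Classical.em (x ∈ Isq) with hx | hx
  · rw [Phi, if_pos hx]
    have hb0 : |x 0| ≤ 1 := abs_le.mpr hx.1
    have hb1 : |x 1| ≤ 1 := abs_le.mpr hx.2
    have hmin : (0:ℝ) ≤ min (1 - |x 0|) (1 - |x 1|) := le_min (by linarith) (by linarith)
    rw [max_eq_right hmin]
    -- upper bounds
    have hup : ∀ i : Fin 2, Metric.infDist x (frontier Isq) ≤ 1 - |x i| := by
      have key : ∀ (v : ℝ) (z : E2), |v| ≤ 1 → z ∈ Isq → (|z 0| = 1 ∨ |z 1| = 1) →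
          dist x z = |v - (if 0 ≤ v then 1 else -1)| → Metric.infDist x (frontier Isq) ≤ 1 - |v| := by
        intro v z hv hzI hz01 hd
        have hfz : z ∈ frontier Isq := mem_frontier_of z hzI hz01
        have h1 := Metric.infDist_le_dist_of_mem (x := x) hfz
        rw [hd] at h1
        have : |v - (if 0 ≤ v then (1:ℝ) else -1)| = 1 - |v| := by
          rcases le_or_gt 0 v with h' | h'
          · rw [if_pos h', abs_of_nonpos (by linarith [abs_le.mp hv]), abs_of_nonneg h']; ring
          · rw [if_neg (not_le.mpr h'), abs_of_nonneg (by linarith [abs_le.mp hv]), abs_of_neg h']; ring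
        linarith
      intro i
      fin_cases i
      · refine key (x 0) (pt (if 0 ≤ x 0 then 1 else -1) (x 1)) hb0 ?_ ?_ ?_
        · constructor
          · rw [pt_app0]; split <;> norm_num
          · rw [pt_app1]; exact Set.mem_Icc.mpr (abs_le.mp hb1)
        · left; rw [pt_app0]; split <;> norm_num
        · rw [dist_eq2, pt_app0, pt_app1, sub_self, zero_pow (by norm_num), add_zero,
            Real.sqrt_sq_eq_abs]
      · refine key (x 1) (pt (x 0) (if 0 ≤ x 1 then 1 else -1)) hb1 ?_ ?_ ?_
        · constructor
          · rw [pt_app0]; exact Set.mem_Icc.mpr (abs_le.mp hb0)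
          · rw [pt_app1]; split <;> norm_num
        · right; rw [pt_app1]; split <;> norm_num
        · rw [dist_eq2, pt_app0, pt_app1, sub_self, zero_pow (by norm_num), zero_add,
            Real.sqrt_sq_eq_abs]
    -- lower bound
    have hlow : min (1 - |x 0|) (1 - |x 1|) ≤ Metric.infDist x (frontier Isq) := by
      by_contra hcon
      push_neg at hcon
      have hne : (frontier Isq).Nonempty := ⟨pt 1 0, mem_frontier_of _ ⟨by rw [pt_app0]; norm_num, by rw [pt_app1]; norm_num⟩ (Or.inl (by rw [pt_app0]; norm_num))⟩
      obtain ⟨z, hzf, hzd⟩ := (Metric.infDist_lt_iff hne).mp hcon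
      obtain ⟨hzI, hz01⟩ := frontier_sub z hzf
      have hgi : ∀ i : Fin 2, |x i - z i| ≤ dist x z := by
        intro i
        rw [dist_eq2]
        have h2 : ∀ a b : ℝ, |a| ≤ Real.sqrt (a^2 + b^2) := by
          intro a b
          rw [← Real.sqrt_sq_eq_abs]
          exact Real.sqrt_le_sqrt (by nlinarith [sq_nonneg b])
        fin_cases i
        · exact h2 _ _
        · calc |x 1 - z 1| = Real.sqrt ((x 1 - z 1)^2) := (Real.sqrt_sq_eq_abs _).symm
            _ ≤ _ := Real.sqrt_le_sqrt (by nlinarith [sq_nonneg (x 0 - z 0)])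
      rcases hz01 with h | h
      · have : 1 - |x 0| ≤ |x 0 - z 0| := by
          have := abs_sub_abs_le_abs_sub (z 0) (x 0)
          rw [h] at this
          linarith [abs_sub_comm (z 0) (x 0) ▸ this]
        have := le_trans this (hgi 0)
        have hm : min (1 - |x 0|) (1 - |x 1|) ≤ 1 - |x 0| := min_le_left _ _
        linarith
      · have : 1 - |x 1| ≤ |x 1 - z 1| := by
          have := abs_sub_abs_le_abs_sub (z 1) (x 1)
          rw [h] at this
          linarith [abs_sub_comm (z 1) (x 1) ▸ this]
        have := le_trans this (hgi 1)
        have hm : min (1 - |x 0|) (1 - |x 1|) ≤ 1 - |x 1| := min_le_right _ _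
        linarith
    exact le_antisymm (le_min (hup 0) (hup 1)) hlow
  · rw [Phi, if_neg hx]
    have : ¬ (|x 0| ≤ 1 ∧ |x 1| ≤ 1) := by
      intro h
      exact hx ⟨Set.mem_Icc.mpr (abs_le.mp h.1), Set.mem_Icc.mpr (abs_le.mp h.2)⟩
    push_neg at this
    rw [max_eq_left]
    rcases le_or_gt (|x 0|) 1 with h0 | h0
    · exact le_trans (min_le_right _ _) (by linarith [this h0])
    · exact le_trans (min_le_left _ _) (by linarith)

def bump (m : ℕ) (j₁ j₂ : Fin m) (x : E2) : ℝ :=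
  Phi (pt (m * (x 0 - gridPt m j₁)) (m * (x 1 - gridPt m j₂)))

lemma bump_eq (m : ℕ) (j₁ j₂ : Fin m) (x : E2) :
    bump m j₁ j₂ x = max 0 (min (1 - |m * (x 0 - gridPt m j₁)|) (1 - |m * (x 1 - gridPt m j₂)|)) := by
  rw [bump, phi_eq, pt_app0, pt_app1]

lemma bump_nonneg (m : ℕ) (j₁ j₂ : Fin m) (x : E2) : 0 ≤ bump m j₁ j₂ x := by
  rw [bump_eq]; exact le_max_left _ _

lemma gridPt_bounds (m : ℕ) (hm : 0 < m) (j : Fin m) :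
    -1 + 1/(m:ℝ) ≤ gridPt m j ∧ gridPt m j ≤ 1 - 1/(m:ℝ) := by
  have hm' : (0:ℝ) < m := by exact_mod_cast hm
  have hj : (j:ℝ) ≤ (m:ℝ) - 1 := by
    have := j.isLt
    have : (j:ℝ) ≤ (m:ℝ) - 1 := by
      have h2 : ((j:ℕ):ℝ) + 1 ≤ (m:ℝ) := by exact_mod_cast Nat.succ_le_of_lt j.isLt
      linarith
    exact this
  have hj0 : (0:ℝ) ≤ (j:ℝ) := Nat.cast_nonneg _
  have h2 : (1:ℝ)/m * m = 1 := by field_simp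
  constructor
  · rw [gridPt]
    have : (1:ℝ)/m ≤ (2*(j:ℝ)+1)/m := by gcongr; linarith
    linarith
  · rw [gridPt]
    have : (2*(j:ℝ)+1)/m ≤ 2 - 1/m := by
      rw [div_le_iff₀ hm']; nlinarith
    linarith

lemma bump_ne_zero (m : ℕ) (hm : 0 < m) {j₁ j₂ : Fin m} {x : E2}
    (h : bump m j₁ j₂ x ≠ 0) :
    |x 0 - gridPt m j₁| < 1/(m:ℝ) ∧ |x 1 - gridPt m j₂| < 1/(m:ℝ) := by
  have hm' : (0:ℝ) < m := by exact_mod_cast hm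
  rw [bump_eq] at h
  have hpos : 0 < min (1 - |(m:ℝ) * (x 0 - gridPt m j₁)|) (1 - |(m:ℝ) * (x 1 - gridPt m j₂)|) := by
    by_contra hc
    push_neg at hc
    rw [max_eq_left hc] at h
    exact h rfl
  obtain ⟨h1, h2⟩ := lt_min_iff.mp hpos
  rw [abs_mul, abs_of_pos hm'] at h1 h2
  constructor
  · rw [lt_div_iff₀ hm']; nlinarith
  · rw [lt_div_iff₀ hm']; nlinarith

lemma bump_unique (m : ℕ) (hm : 0 < m) {j₁ j₂ k₁ k₂ : Fin m} {x : E2}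
    (h : bump m j₁ j₂ x ≠ 0) (h' : bump m k₁ k₂ x ≠ 0) : j₁ = k₁ ∧ j₂ = k₂ := by
  have hm' : (0:ℝ) < m := by exact_mod_cast hm
  obtain ⟨h1, h2⟩ := bump_ne_zero m hm h
  obtain ⟨h1', h2'⟩ := bump_ne_zero m hm h'
  have key : ∀ a b : Fin m, ∀ v : ℝ, |v - gridPt m a| < 1/(m:ℝ) → |v - gridPt m b| < 1/(m:ℝ) → a = b := by
    intro a b v ha hb
    have hd : |gridPt m a - gridPt m b| < 2/(m:ℝ) := by
      calc |gridPt m a - gridPt m b| = |(gridPt m a - v) + (v - gridPt m b)| := by ring_nf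
        _ ≤ |gridPt m a - v| + |v - gridPt m b| := abs_add_le _ _
        _ < 1/m + 1/m := by rw [abs_sub_comm]; linarith
        _ = 2/m := by ring
    have hq : gridPt m a - gridPt m b = 2*((a:ℝ) - (b:ℝ))/m := by
      rw [gridPt, gridPt]; field_simp; ring
    rw [hq] at hd
    have : |(a:ℝ) - (b:ℝ)| < 1 := by
      rw [abs_div, abs_of_pos hm'] at hd
      rw [div_lt_div_iff₀ hm' hm'] at hd
      have : |2*((a:ℝ)-(b:ℝ))| = 2 * |(a:ℝ)-(b:ℝ)| := by rw [abs_mul]; norm_num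
      nlinarith [abs_nonneg ((a:ℝ)-(b:ℝ))]
    have h3 := abs_lt.mp this
    have ha' : ((a:ℕ):ℝ) < ((b:ℕ):ℝ) + 1 := by push_cast; linarith
    have hb' : ((b:ℕ):ℝ) < ((a:ℕ):ℝ) + 1 := by push_cast; linarith
    have : (a:ℕ) < (b:ℕ) + 1 := by exact_mod_cast ha'
    have : (b:ℕ) < (a:ℕ) + 1 := by exact_mod_cast hb'
    exact Fin.ext (by omega)
  exact ⟨key j₁ k₁ (x 0) h1 h1', key j₂ k₂ (x 1) h2 h2'⟩

lemma scalar_le (m : ℕ) (hm : 0 < m) (t v : ℝ) (ht1 : -1 + 1/(m:ℝ) ≤ t) (ht2 : t ≤ 1 - 1/(m:ℝ)) :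
    max 0 (1 - |(m:ℝ) * (v - t)|) ≤ m * max 0 (1 - v) ∧
    max 0 (1 - |(m:ℝ) * (v - t)|) ≤ m * max 0 (1 + v) := by
  have hm' : (0:ℝ) < m := by exact_mod_cast hm
  have hinv : (m:ℝ) * (1/m) = 1 := by field_simp
  have habs : |(m:ℝ) * (v - t)| = m * |v - t| := by rw [abs_mul, abs_of_pos hm']
  constructor
  · rcases le_or_gt (1 - |(m:ℝ) * (v - t)|) 0 with h | h
    · rw [max_eq_left h]
      positivity
    · rw [max_eq_right h.le]
      have h1 : 1 - |(m:ℝ)*(v-t)| ≤ m * (1 - v) := by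
        rw [habs]
        have : v - t ≤ |v - t| := le_abs_self _
        nlinarith
      have h2 : (m:ℝ) * (1 - v) ≤ m * max 0 (1 - v) := by
        apply mul_le_mul_of_nonneg_left (le_max_right _ _) hm'.le
      linarith
  · rcases le_or_gt (1 - |(m:ℝ) * (v - t)|) 0 with h | h
    · rw [max_eq_left h]
      positivity
    · rw [max_eq_right h.le]
      have h1 : 1 - |(m:ℝ)*(v-t)| ≤ m * (1 + v) := by
        rw [habs]
        have : t - v ≤ |v - t| := by rw [abs_sub_comm]; exact le_abs_self _
        nlinarith
      have h2 : (m:ℝ) * (1 + v) ≤ m * max 0 (1 + v) := by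
        apply mul_le_mul_of_nonneg_left (le_max_right _ _) hm'.le
      linarith

lemma bump_le0 (m : ℕ) (hm : 0 < m) (j₁ j₂ : Fin m) (x : E2) :
    bump m j₁ j₂ x ≤ m * max 0 (1 - x 0) ∧ bump m j₁ j₂ x ≤ m * max 0 (1 + x 0) := by
  obtain ⟨ht1, ht2⟩ := gridPt_bounds m hm j₁
  have h := scalar_le m hm (gridPt m j₁) (x 0) ht1 ht2
  have hle : bump m j₁ j₂ x ≤ max 0 (1 - |(m:ℝ) * (x 0 - gridPt m j₁)|) := by
    rw [bump_eq]
    exact max_le_max (le_refl 0) (min_le_left _ _)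
  exact ⟨hle.trans h.1, hle.trans h.2⟩

lemma bump_le1 (m : ℕ) (hm : 0 < m) (j₁ j₂ : Fin m) (x : E2) :
    bump m j₁ j₂ x ≤ m * max 0 (1 - x 1) ∧ bump m j₁ j₂ x ≤ m * max 0 (1 + x 1) := by
  obtain ⟨ht1, ht2⟩ := gridPt_bounds m hm j₂
  have h := scalar_le m hm (gridPt m j₂) (x 1) ht1 ht2
  have hle : bump m j₁ j₂ x ≤ max 0 (1 - |(m:ℝ) * (x 1 - gridPt m j₂)|) := by
    rw [bump_eq]
    exact max_le_max (le_refl 0) (min_le_right _ _)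
  exact ⟨hle.trans h.1, hle.trans h.2⟩

lemma bump_lip (m : ℕ) (hm : 0 < m) (j₁ j₂ : Fin m) (x y : E2) :
    |bump m j₁ j₂ x - bump m j₁ j₂ y| ≤ m * max (|x 0 - y 0|) (|x 1 - y 1|) := by
  have hm' : (0:ℝ) < m := by exact_mod_cast hm
  rw [bump_eq, bump_eq]
  set A := min (1 - |(m:ℝ) * (x 0 - gridPt m j₁)|) (1 - |(m:ℝ) * (x 1 - gridPt m j₂)|)
  set B := min (1 - |(m:ℝ) * (y 0 - gridPt m j₁)|) (1 - |(m:ℝ) * (y 1 - gridPt m j₂)|)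
  have h1 : |max 0 A - max 0 B| ≤ |A - B| := by
    rw [max_comm 0 A, max_comm 0 B]
    exact abs_max_sub_max_le_abs A B 0
  have h2 : |A - B| ≤ max (|(1 - |(m:ℝ) * (x 0 - gridPt m j₁)|) - (1 - |(m:ℝ) * (y 0 - gridPt m j₁)|)|)
      (|(1 - |(m:ℝ) * (x 1 - gridPt m j₂)|) - (1 - |(m:ℝ) * (y 1 - gridPt m j₂)|)|) :=
    abs_min_sub_min_le_max _ _ _ _
  have key : ∀ (t u v : ℝ), |(1 - |(m:ℝ) * (u - t)|) - (1 - |(m:ℝ) * (v - t)|)| ≤ m * |u - v| := by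
    intro t u v
    have : (1 - |(m:ℝ) * (u - t)|) - (1 - |(m:ℝ) * (v - t)|) = |(m:ℝ) * (v - t)| - |(m:ℝ) * (u - t)| := by ring
    rw [this]
    calc |(|(m:ℝ) * (v - t)| - |(m:ℝ) * (u - t)|)| ≤ |(m:ℝ) * (v - t) - (m:ℝ) * (u - t)| :=
          abs_abs_sub_abs_le_abs_sub _ _
      _ = m * |v - u| := by rw [← mul_sub, abs_mul, abs_of_pos hm']; ring_nf
      _ = m * |u - v| := by rw [abs_sub_comm]
  have h3 : max (|(1 - |(m:ℝ) * (x 0 - gridPt m j₁)|) - (1 - |(m:ℝ) * (y 0 - gridPt m j₁)|)|)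
      (|(1 - |(m:ℝ) * (x 1 - gridPt m j₂)|) - (1 - |(m:ℝ) * (y 1 - gridPt m j₂)|)|)
      ≤ max ((m:ℝ) * |x 0 - y 0|) ((m:ℝ) * |x 1 - y 1|) :=
    max_le_max (key _ _ _) (key _ _ _)
  have h4 : max ((m:ℝ) * |x 0 - y 0|) ((m:ℝ) * |x 1 - y 1|) = m * max (|x 0 - y 0|) (|x 1 - y 1|) := by
    rw [mul_max_of_nonneg _ _ hm'.le]
  linarith

lemma chi_eq_sum (m : ℕ) (M : ℝ) (θ : Fin m → Fin m → ℝ) (x : E2) :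
    chi m M θ x = ∑ j₁ : Fin m, ∑ j₂ : Fin m, (θ j₁ j₂ / M) * bump m j₁ j₂ x := rfl

section chiLemmas
variable (m : ℕ) (hm : 0 < m) (M : ℝ) (hM : 2 * (m : ℝ) < M)
  (θ : Fin m → Fin m → ℝ) (hθ : ∀ j₁ j₂, θ j₁ j₂ = 0 ∨ θ j₁ j₂ = 1)

include hm hM hθ

lemma M_pos : (0:ℝ) < M := by
  have : (0:ℝ) < m := by exact_mod_cast hm
  linarith

lemma theta_nonneg : ∀ j₁ j₂, 0 ≤ θ j₁ j₂ := by
  intro j₁ j₂; rcases hθ j₁ j₂ with h | h <;> rw [h] <;> norm_num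

lemma theta_le_one : ∀ j₁ j₂, θ j₁ j₂ ≤ 1 := by
  intro j₁ j₂; rcases hθ j₁ j₂ with h | h <;> rw [h] <;> norm_num

lemma chi_nonneg (x : E2) : 0 ≤ chi m M θ x := by
  rw [chi_eq_sum]
  apply Finset.sum_nonneg
  intro j₁ _
  apply Finset.sum_nonneg
  intro j₂ _
  have := M_pos m hm M hM θ hθ
  have h1 := theta_nonneg m hm M hM θ hθ j₁ j₂
  have h2 := bump_nonneg m j₁ j₂ x
  positivity

lemma chi_term_le (x : E2) (a b : Fin m) :
    (θ a b / M) * bump m a b x ≤ chi m M θ x := by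
  rw [chi_eq_sum]
  have hMpos := M_pos m hm M hM θ hθ
  have hnn : ∀ j₁ j₂ : Fin m, 0 ≤ (θ j₁ j₂ / M) * bump m j₁ j₂ x := by
    intro j₁ j₂
    have h1 := theta_nonneg m hm M hM θ hθ j₁ j₂
    have h2 := bump_nonneg m j₁ j₂ x
    positivity
  calc (θ a b / M) * bump m a b x ≤ ∑ j₂ : Fin m, (θ a j₂ / M) * bump m a j₂ x :=
        Finset.single_le_sum (fun j₂ _ => hnn a j₂) (Finset.mem_univ b)
    _ ≤ _ := Finset.single_le_sum
        (fun j₁ _ => Finset.sum_nonneg fun j₂ _ => hnn j₁ j₂) (Finset.mem_univ a)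

lemma chi_cases (x : E2) :
    chi m M θ x = 0 ∨ ∃ a b : Fin m,
      chi m M θ x = (θ a b / M) * bump m a b x ∧ bump m a b x ≠ 0 := by
  by_cases h : ∀ a b : Fin m, (θ a b / M) * bump m a b x = 0
  · left
    rw [chi_eq_sum]
    simp only [h, Finset.sum_const_zero]
  · right
    push_neg at h
    obtain ⟨a, b, hab⟩ := h
    have hbump : bump m a b x ≠ 0 := fun hb => hab (by rw [hb, mul_zero])
    refine ⟨a, b, ?_, hbump⟩
    rw [chi_eq_sum]
    rw [Finset.sum_eq_single a]
    · rw [Finset.sum_eq_single b]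
      · intro k _ hk
        by_contra hne
        have : bump m a k x ≠ 0 := fun hb => hne (by rw [hb, mul_zero])
        exact hk (bump_unique m hm this hbump).2
      · intro hb'; exact absurd (Finset.mem_univ b) hb'
    · intro k _ hk
      apply Finset.sum_eq_zero
      intro l _
      by_contra hne
      have : bump m k l x ≠ 0 := fun hb => hne (by rw [hb, mul_zero])
      exact hk (bump_unique m hm this hbump).1
    · intro ha'; exact absurd (Finset.mem_univ a) ha'

lemma chi_le (x : E2) :
    (chi m M θ x ≤ (m / M) * max 0 (1 - x 0)) ∧ (chi m M θ x ≤ (m / M) * max 0 (1 + x 0)) ∧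
    (chi m M θ x ≤ (m / M) * max 0 (1 - x 1)) ∧ (chi m M θ x ≤ (m / M) * max 0 (1 + x 1)) := by
  have hMpos := M_pos m hm M hM θ hθ
  have hm' : (0:ℝ) < m := by exact_mod_cast hm
  have key : ∀ c : ℝ, (∀ a b : Fin m, bump m a b x ≤ m * max 0 c) → chi m M θ x ≤ (m / M) * max 0 c := by
    intro c hc
    rcases chi_cases m hm M hM θ hθ x with h | ⟨a, b, h, _⟩
    · rw [h]; positivity
    · rw [h]
      have h1 := theta_nonneg m hm M hM θ hθ a b
      have h2 := theta_le_one m hm M hM θ hθ a b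
      have h3 := bump_nonneg m a b x
      calc (θ a b / M) * bump m a b x ≤ (1 / M) * bump m a b x := by
            apply mul_le_mul_of_nonneg_right _ h3
            gcongr
        _ ≤ (1 / M) * (m * max 0 c) := by
            apply mul_le_mul_of_nonneg_left (hc a b) (by positivity)
        _ = (m / M) * max 0 c := by ring
  exact ⟨key _ (fun a b => (bump_le0 m hm a b x).1), key _ (fun a b => (bump_le0 m hm a b x).2),
    key _ (fun a b => (bump_le1 m hm a b x).1), key _ (fun a b => (bump_le1 m hm a b x).2)⟩

lemma chi_lip (x y : E2) :
    |chi m M θ x - chi m M θ y| ≤ (m / M) * max (|x 0 - y 0|) (|x 1 - y 1|) := by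
  have hMpos := M_pos m hm M hM θ hθ
  have hm' : (0:ℝ) < m := by exact_mod_cast hm
  have key : ∀ u v : E2, chi m M θ u - chi m M θ v ≤ (m / M) * max (|u 0 - v 0|) (|u 1 - v 1|) := by
    intro u v
    rcases chi_cases m hm M hM θ hθ u with h | ⟨a, b, h, _⟩
    · have := chi_nonneg m hm M hM θ hθ v
      rw [h]
      have : (0:ℝ) ≤ (m / M) * max (|u 0 - v 0|) (|u 1 - v 1|) := by positivity
      linarith
    · have hterm := chi_term_le m hm M hM θ hθ v a b
      have h1 := theta_nonneg m hm M hM θ hθ a b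
      have h2 := theta_le_one m hm M hM θ hθ a b
      have hlip := bump_lip m hm a b u v
      have hfrac : 0 ≤ θ a b / M := by positivity
      have hfle : θ a b / M ≤ 1 / M := by gcongr
      calc chi m M θ u - chi m M θ v ≤ (θ a b / M) * bump m a b u - (θ a b / M) * bump m a b v := by
            rw [h]; linarith
        _ = (θ a b / M) * (bump m a b u - bump m a b v) := by ring
        _ ≤ (θ a b / M) * |bump m a b u - bump m a b v| :=
            mul_le_mul_of_nonneg_left (le_abs_self _) hfrac
        _ ≤ (1 / M) * ((m:ℝ) * max (|u 0 - v 0|) (|u 1 - v 1|)) := by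
            apply mul_le_mul hfle hlip (abs_nonneg _) (by positivity)
        _ = (m / M) * max (|u 0 - v 0|) (|u 1 - v 1|) := by ring
  rw [abs_sub_le_iff]
  refine ⟨key x y, ?_⟩
  have := key y x
  rw [abs_sub_comm (y 0) (x 0), abs_sub_comm (y 1) (x 1)] at this
  exact this

end chiLemmas

lemma sqrt_aux (a b p q : ℝ) (ha : |a| ≤ (1/2) * max (|p|) (|q|)) (hb : |b| ≤ (1/2) * max (|p|) (|q|)) :
    Real.sqrt (a^2 + b^2) ≤ (7/8) * Real.sqrt (p^2 + q^2) := by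
  have hD : max (|p|) (|q|) ^ 2 ≤ p^2 + q^2 := by
    rcases max_cases (|p|) (|q|) with ⟨h, _⟩ | ⟨h, _⟩ <;> rw [h] <;>
      nlinarith [sq_abs p, sq_abs q, sq_nonneg p, sq_nonneg q]
  have ha2 : a^2 ≤ ((1/2) * max (|p|) (|q|))^2 := by
    rw [← sq_abs]; exact pow_le_pow_left₀ (abs_nonneg _) ha 2
  have hb2 : b^2 ≤ ((1/2) * max (|p|) (|q|))^2 := by
    rw [← sq_abs]; exact pow_le_pow_left₀ (abs_nonneg _) hb 2
  have h1 : a^2 + b^2 ≤ (49/64) * (p^2 + q^2) := by nlinarith [sq_nonneg p, sq_nonneg q]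
  calc Real.sqrt (a^2 + b^2) ≤ Real.sqrt ((49/64) * (p^2 + q^2)) := Real.sqrt_le_sqrt h1
    _ = (7/8) * Real.sqrt (p^2 + q^2) := by
        rw [Real.sqrt_mul (by norm_num), show Real.sqrt (49/64) = 7/8 by
          rw [show (49/64:ℝ) = (7/8)^2 by norm_num, Real.sqrt_sq (by norm_num)]]

theorem stmt_7 (m : ℕ) (hm : 0 < m) (M : ℝ) (hM : 2 * (m : ℝ) < M)
    (θ₁ θ₂ : Fin m → Fin m → ℝ)
    (hθ₁ : ∀ j₁ j₂, θ₁ j₁ j₂ = 0 ∨ θ₁ j₁ j₂ = 1)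
    (hθ₂ : ∀ j₁ j₂, θ₂ j₁ j₂ = 0 ∨ θ₂ j₁ j₂ = 1) :
    Set.BijOn (fun x => pt (x 0 + chi m M θ₁ x) (x 1 + chi m M θ₂ x)) Isq Isq := by
  have hm' : (0:ℝ) < m := by exact_mod_cast hm
  have hMpos : (0:ℝ) < M := by linarith
  have hhalf : (m:ℝ) / M < 1/2 := by rw [div_lt_iff₀ hMpos]; linarith
  have hfracnn : (0:ℝ) ≤ (m:ℝ)/M := by positivity
  refine ⟨?_, ?_, ?_⟩
  · -- MapsTo
    intro x hx
    obtain ⟨⟨hx0l, hx0u⟩, ⟨hx1l, hx1u⟩⟩ := hx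
    have hc1 := chi_nonneg m hm M hM θ₁ hθ₁ x
    have hc2 := chi_nonneg m hm M hM θ₂ hθ₂ x
    have hl1 := (chi_le m hm M hM θ₁ hθ₁ x).1
    have hl2 := (chi_le m hm M hM θ₂ hθ₂ x).2.2.1
    rw [max_eq_right (by linarith : (0:ℝ) ≤ 1 - x 0)] at hl1
    rw [max_eq_right (by linarith : (0:ℝ) ≤ 1 - x 1)] at hl2
    constructor
    · show x 0 + chi m M θ₁ x ∈ Set.Icc (-1:ℝ) 1
      constructor
      · show -1 ≤ x 0 + chi m M θ₁ x; linarith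
      · show x 0 + chi m M θ₁ x ≤ 1; nlinarith
    · show x 1 + chi m M θ₂ x ∈ Set.Icc (-1:ℝ) 1
      constructor
      · show -1 ≤ x 1 + chi m M θ₂ x; linarith
      · show x 1 + chi m M θ₂ x ≤ 1; nlinarith
  · -- InjOn
    intro x _ y _ heq
    have h0 : x 0 + chi m M θ₁ x = y 0 + chi m M θ₁ y := congrArg (fun z : E2 => z 0) heq
    have h1 : x 1 + chi m M θ₂ x = y 1 + chi m M θ₂ y := congrArg (fun z : E2 => z 1) heq
    set D := max (|x 0 - y 0|) (|x 1 - y 1|) with hD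
    have hDnn : 0 ≤ D := le_trans (abs_nonneg _) (le_max_left _ _)
    have hb0 : |x 0 - y 0| ≤ (m/M) * D := by
      have : x 0 - y 0 = chi m M θ₁ y - chi m M θ₁ x := by linarith
      rw [this, abs_sub_comm]
      exact chi_lip m hm M hM θ₁ hθ₁ x y
    have hb1 : |x 1 - y 1| ≤ (m/M) * D := by
      have : x 1 - y 1 = chi m M θ₂ y - chi m M θ₂ x := by linarith
      rw [this, abs_sub_comm]
      exact chi_lip m hm M hM θ₂ hθ₂ x y
    have hDle : D ≤ (m/M) * D := max_le hb0 hb1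
    have hD0 : D = 0 := by nlinarith
    have he0 : x 0 = y 0 := by
      have h' : |x 0 - y 0| ≤ D := le_max_left _ _
      rw [hD0] at h'
      have := abs_eq_zero.mp (le_antisymm h' (abs_nonneg _))
      linarith
    have he1 : x 1 = y 1 := by
      have h' : |x 1 - y 1| ≤ D := le_max_right _ _
      rw [hD0] at h'
      have := abs_eq_zero.mp (le_antisymm h' (abs_nonneg _))
      linarith
    ext i
    fin_cases i
    · exact he0
    · exact he1
  · -- SurjOn
    intro y hy
    obtain ⟨⟨hy0l, hy0u⟩, ⟨hy1l, hy1u⟩⟩ := hy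
    set T : E2 → E2 := fun x => pt (y 0 - chi m M θ₁ x) (y 1 - chi m M θ₂ x) with hT
    have hcontr : ContractingWith (7/8 : NNReal) T := by
      constructor
      · rw [← NNReal.coe_lt_coe]; norm_num
      · apply LipschitzWith.of_dist_le_mul
        intro u v
        have hk : ((7/8 : NNReal) : ℝ) = 7/8 := by norm_num
        rw [hk]
        rw [dist_eq2 (T u) (T v), dist_eq2 u v]
        have hTu0 : T u 0 = y 0 - chi m M θ₁ u := rfl
        have hTv0 : T v 0 = y 0 - chi m M θ₁ v := rfl
        have hTu1 : T u 1 = y 1 - chi m M θ₂ u := rfl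
        have hTv1 : T v 1 = y 1 - chi m M θ₂ v := rfl
        rw [hTu0, hTv0, hTu1, hTv1]
        apply sqrt_aux
        · have e : y 0 - chi m M θ₁ u - (y 0 - chi m M θ₁ v) = -(chi m M θ₁ u - chi m M θ₁ v) := by ring
          rw [e, abs_neg]
          have h := chi_lip m hm M hM θ₁ hθ₁ u v
          have hd : max (|u 0 - v 0|) (|u 1 - v 1|) ≥ 0 := le_trans (abs_nonneg _) (le_max_left _ _)
          nlinarith
        · have e : y 1 - chi m M θ₂ u - (y 1 - chi m M θ₂ v) = -(chi m M θ₂ u - chi m M θ₂ v) := by ring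
          rw [e, abs_neg]
          have h := chi_lip m hm M hM θ₂ hθ₂ u v
          have hd : max (|u 0 - v 0|) (|u 1 - v 1|) ≥ 0 := le_trans (abs_nonneg _) (le_max_left _ _)
          nlinarith
    have : Nonempty E2 := ⟨0⟩
    set x := ContractingWith.fixedPoint T hcontr with hxdef
    have hfix : T x = x := hcontr.fixedPoint_isFixedPt
    have hx0 : x 0 = y 0 - chi m M θ₁ x := by
      conv_lhs => rw [← hfix]
      rfl
    have hx1 : x 1 = y 1 - chi m M θ₂ x := by
      conv_lhs => rw [← hfix]
      rfl
    have hc1 := chi_nonneg m hm M hM θ₁ hθ₁ x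
    have hc2 := chi_nonneg m hm M hM θ₂ hθ₂ x
    have hxI : x ∈ Isq := by
      constructor
      · constructor
        · by_contra hcon
          push_neg at hcon
          have hle := (chi_le m hm M hM θ₁ hθ₁ x).2.1
          rw [max_eq_left (by linarith : 1 + x 0 ≤ 0)] at hle
          have : chi m M θ₁ x = 0 := le_antisymm (by linarith) hc1
          rw [this] at hx0
          linarith
        · linarith [hx0, hc1]
      · constructor
        · by_contra hcon
          push_neg at hcon
          have hle := (chi_le m hm M hM θ₂ hθ₂ x).2.2.2
          rw [max_eq_left (by linarith : 1 + x 1 ≤ 0)] at hle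
          have : chi m M θ₂ x = 0 := le_antisymm (by linarith) hc2
          rw [this] at hx1
          linarith
        · linarith [hx1, hc2]
    refine ⟨x, hxI, ?_⟩
    show pt (x 0 + chi m M θ₁ x) (x 1 + chi m M θ₂ x) = y
    ext i
    fin_cases i
    · show x 0 + chi m M θ₁ x = y 0
      rw [hx0]; ring
    · show x 1 + chi m M θ₂ x = y 1
      rw [hx1]; ring
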